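/- In a DAG G, two distinct vertices p and q are adjacent if and only if they are d-connected given every subset S ⊆ V \ {p, q}; equivalently, p and q are nonadjacent iff they are d-separated by Pa(p) \ {q} or by Pa(q) \ {p} (the parents of p excluding q, or the parents of q excluding p). -/

import Mathlib

/-- The predicate on a walk (list of vertices) that every interior vertex is "active"
given the conditioning set `S`: colliders must have a descendant in `S`, and
non-colliders must lie outside `S`. -/
def ActiveList {V : Type*} (E : V → V → Prop) (S : Set V) : List V → Prop
  | a :: b :: c :: l =>
      ((E a b ∧ E c b) → ∃ d, Relation.ReflTransGen E b d ∧ d ∈ S) ∧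
      (¬(E a b ∧ E c b) → b ∉ S) ∧
      ActiveList E S (b :: c :: l)
  | _ => True

/-- `p` and `q` are d-connected given `S` in the directed graph `E`: there is a
path (repetition-free undirected walk) from `p` to `q` all of whose interior
vertices are active given `S`. -/
def DConnected {V : Type*} (E : V → V → Prop) (S : Set V) (p q : V) : Prop :=
  ∃ l : List V, l.Nodup ∧ l.Chain' (fun a b => E a b ∨ E b a) ∧
    l.head? = some p ∧ l.getLast? = some q ∧ ActiveList E S l

section Aux
variable {V : Type*} (E : V → V → Prop) (S : Set V)

/-- The pointwise condition on a triple. -/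
def Act3 (a b c : V) : Prop :=
  ((E a b ∧ E c b) → ∃ d, Relation.ReflTransGen E b d ∧ d ∈ S) ∧
  (¬(E a b ∧ E c b) → b ∉ S)

lemma act3_symm {a b c : V} (h : Act3 E S a b c) : Act3 E S c b a := by
  obtain ⟨h1, h2⟩ := h
  exact ⟨fun hh => h1 ⟨hh.2, hh.1⟩, fun hh => h2 (fun hh' => hh ⟨hh'.2, hh'.1⟩)⟩

lemma activeList_iff_infix : ∀ l : List V,
    ActiveList E S l ↔ ∀ a b c : V, [a, b, c] <:+: l → Act3 E S a b c
  | [] => by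
      simp only [ActiveList]
      constructor
      · rintro _ a b c ⟨s, t, h⟩; simp at h
      · intro _; trivial
  | [x] => by
      simp only [ActiveList]
      constructor
      · rintro _ a b c ⟨s, t, h⟩
        cases s <;> simp_all
      · intro _; trivial
  | [x, y] => by
      simp only [ActiveList]
      constructor
      · rintro _ a b c ⟨s, t, h⟩
        cases s with
        | nil => simp_all
        | cons u s' => cases s' <;> simp_all
      · intro _; trivial
  | x :: y :: z :: l => by
      rw [show ActiveList E S (x :: y :: z :: l) ↔
          Act3 E S x y z ∧ ActiveList E S (y :: z :: l) from by
        simp only [ActiveList, Act3]; tauto]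
      rw [activeList_iff_infix (y :: z :: l)]
      constructor
      · rintro ⟨hxyz, hrec⟩ a b c ⟨s, t, h⟩
        cases s with
        | nil =>
          simp only [List.nil_append, List.cons_append, List.cons.injEq] at h
          obtain ⟨rfl, rfl, rfl, _⟩ := h
          exact hxyz
        | cons u s' =>
          simp only [List.cons_append, List.cons.injEq] at h
          exact hrec a b c ⟨s', t, h.2⟩
      · intro h
        refine ⟨h x y z ⟨[], l, by simp⟩, fun a b c hin => h a b c (List.infix_cons hin)⟩

lemma activeList_reverse {l : List V} (h : ActiveList E S l) :
    ActiveList E S l.reverse := by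
  rw [activeList_iff_infix] at h ⊢
  intro a b c hin
  have : [c, b, a] <:+: l := by
    rw [← List.reverse_infix]
    simpa using hin
  exact act3_symm E S (h c b a this)

lemma dconnected_symm {p q : V} (h : DConnected E S p q) : DConnected E S q p := by
  obtain ⟨l, hnd, hch, hh, hl, hact⟩ := h
  refine ⟨l.reverse, List.nodup_reverse.2 hnd, ?_, ?_, ?_, activeList_reverse E S hact⟩
  · refine List.isChain_reverse.mpr ?_
    exact hch.imp (fun a b hab => hab.symm)
  · rw [List.head?_reverse]; exact hl
  · rw [List.getLast?_reverse]; exact hh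

/-- Key inductive step: a directed-out segment of an active path must eventually
reach `q` or hit a collider whose activation yields a cycle. -/
lemma aux (hacyclic : ∀ v, ¬ Relation.TransGen E v v) {p q : V}
    (hS : ∀ d ∈ S, E d p) (hq : ¬ Relation.ReflTransGen E p q) :
    ∀ (l : List V) (a b : V), E a b → Relation.ReflTransGen E p b →
      List.Chain' (fun x y => E x y ∨ E y x) (a :: b :: l) →
      ActiveList E S (a :: b :: l) → (a :: b :: l).getLast? = some q → False
  | [], a, b, hab, hpb, _, _, hl => by
      simp only [List.getLast?_cons_cons, List.getLast?_singleton, Option.some.injEq] at hl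
      exact hq (hl ▸ hpb)
  | c :: t, a, b, hab, hpb, hch, hact, hl => by
      obtain ⟨h1, h2, h3⟩ := hact
      have hch' : List.Chain' (fun x y => E x y ∨ E y x) (b :: c :: t) :=
        (List.isChain_cons_cons.mp hch).2
      by_cases hcb : E c b
      · obtain ⟨d, hbd, hdS⟩ := h1 ⟨hab, hcb⟩
        exact hacyclic p (Relation.TransGen.tail' (hpb.trans hbd) (hS d hdS))
      · have hbc : E b c := ((List.isChain_cons_cons.mp hch').1).resolve_right hcb
        exact aux hacyclic hS hq t b c hbc (hpb.tail hbc) hch' h3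
          (by rw [List.getLast?_cons_cons] at hl; exact hl)

/-- Local Markov style separation: if `q` is not a descendant of `p` and they are
nonadjacent, then `Pa(p) \ {q}` d-separates them. -/
lemma sep_head (hacyclic : ∀ v, ¬ Relation.TransGen E v v) {p q : V} (hpq : p ≠ q)
    (hnadj : ¬(E p q ∨ E q p)) (hq : ¬ Relation.ReflTransGen E p q) :
    ¬ DConnected E ({v | E v p} \ {q}) p q := by
  rintro ⟨l, hnd, hch, hh, hl, hact⟩
  have hS : ∀ d ∈ ({v | E v p} \ {q} : Set V), E d p := fun d hd => hd.1
  cases l with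
  | nil => simp at hh
  | cons x rest =>
    simp only [List.head?_cons, Option.some.injEq] at hh
    subst hh
    cases rest with
    | nil =>
      simp only [List.getLast?_singleton, Option.some.injEq] at hl
      exact hpq hl
    | cons u rest' =>
      by_cases hpu : E x u
      · exact aux E _ hacyclic hS hq rest' x u hpu (Relation.ReflTransGen.single hpu)
          hch hact hl
      · have hup : E u x := ((List.isChain_cons_cons.mp hch).1).resolve_left hpu
        have huq : u ≠ q := fun h => hnadj (Or.inr (h ▸ hup))
        cases rest' with
        | nil =>
          simp only [List.getLast?_cons_cons, List.getLast?_singleton,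
            Option.some.injEq] at hl
          exact huq hl
        | cons w t =>
          obtain ⟨h1, h2, h3⟩ := hact
          exact h2 (fun hh => hpu hh.1) ⟨hup, huq⟩

end Aux

/-- In a finite DAG, two distinct vertices `p` and `q` are adjacent iff they are
d-connected given every subset `S ⊆ V \ {p,q}`; equivalently, `p` and `q` are
nonadjacent iff they are d-separated by `Pa(p) \ {q}` or by `Pa(q) \ {p}`. -/
theorem stmt_16 {V : Type*} [Fintype V] [DecidableEq V]
    (E : V → V → Prop) (hacyclic : ∀ v, ¬ Relation.TransGen E v v)
    (p q : V) (hpq : p ≠ q) :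
    ((E p q ∨ E q p) ↔ ∀ S : Set V, p ∉ S → q ∉ S → DConnected E S p q) ∧
    (¬(E p q ∨ E q p) ↔
      (¬ DConnected E ({v | E v p} \ {q}) p q ∨
       ¬ DConnected E ({v | E v q} \ {p}) p q)) := by
  -- adjacency gives d-connection for every S
  have hadj_conn : (E p q ∨ E q p) → ∀ S : Set V, DConnected E S p q := by
    intro hadj S
    refine ⟨[p, q], by simp [hpq], List.isChain_pair.mpr hadj, rfl, by simp, ?_⟩
    simp [ActiveList]
  -- not both directions of reachability
  have hcases : ¬ Relation.ReflTransGen E p q ∨ ¬ Relation.ReflTransGen E q p := by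
    by_contra h
    push_neg at h
    obtain ⟨h1, h2⟩ := h
    have t1 : Relation.TransGen E p q :=
      (Relation.reflTransGen_iff_eq_or_transGen.mp h1).resolve_left (Ne.symm hpq)
    exact hacyclic q (Relation.TransGen.trans_right h2 t1)
  -- the key hard direction
  have key : ¬(E p q ∨ E q p) →
      (¬ DConnected E ({v | E v p} \ {q}) p q ∨
       ¬ DConnected E ({v | E v q} \ {p}) p q) := by
    intro hnadj
    rcases hcases with hc | hc
    · exact Or.inl (sep_head E hacyclic hpq hnadj hc)
    · refine Or.inr (fun hd => ?_)
      exact sep_head E hacyclic (Ne.symm hpq) (fun h => hnadj h.symm) hc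
        (dconnected_symm E _ hd)
  -- membership facts
  have hp1 : p ∉ ({v | E v p} \ {q} : Set V) := fun h =>
    hacyclic p (Relation.TransGen.single h.1)
  have hq1 : q ∉ ({v | E v p} \ {q} : Set V) := fun h => h.2 rfl
  have hp2 : p ∉ ({v | E v q} \ {p} : Set V) := fun h => h.2 rfl
  have hq2 : q ∉ ({v | E v q} \ {p} : Set V) := fun h =>
    hacyclic q (Relation.TransGen.single h.1)
  constructor
  · constructor
    · intro hadj S _ _; exact hadj_conn hadj S
    · intro h
      by_contra hnadj
      rcases key hnadj with h1 | h1
      · exact h1 (h _ hp1 hq1)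
      · exact h1 (h _ hp2 hq2)
  · constructor
    · exact key
    · rintro (h1 | h1) hadj
      · exact h1 (hadj_conn hadj _)
      · exact h1 (hadj_conn hadj _)
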